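/- Fix types Id, Loc, Env, let Σ = Id × Loc × Env, and fix locations l, l' : Loc and a transfer function step : Env → Env. Over the powerset lattice Λ = 𝒫(Σ) (whose atoms are the singletons), consider the rewriting rule R with guard G = ⊤*·⟨_, l, _⟩·⊤* (n = 1, star guards g₀ = g₁ = Σ, and the one-letter middle word w₁ = {(id, k, ρ) : k = l}) and rewriting functions F = Id*·f·Id*, where the star functions are the identity on the matched letter (h₀(x, v) = h₁(x, v) = x) and f(X) = {(id, l', step ρ) : (id, l, ρ) ∈ X}. Identifying each word σ₁⋯σ_m ∈ Σ* with the word of singletons {σ₁}⋯{σ_m}, for every language E ⊆ Σ* the rule computes exactly the post-image of the local instruction: R(E) = {x·(id, l', step ρ)·y : x·(id, l, ρ)·y ∈ E}. -/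

import Mathlib

/-- Pointwise order on words over `Λ`: same length and letterwise `≤`. -/
def WordLE {Λ : Type*} [LE Λ] (u v : List Λ) : Prop :=
  List.Forall₂ (· ≤ ·) u v

/-- A rewriting rule over `Λ`, with guard `(g 0)⋆ · w 0 · (g 1)⋆ · w 1 ⋯ w (n-1) · (g n)⋆`
(the words `w i`, `i < n`, are nonempty) and rewriting functions
`f 0 · h 0 · f 1 · h 1 ⋯ h n · f (n+1)`; the functions `f i : Λ^N → Λ*` and
`h i : Λ × Λ^N → Λ` receive the concatenation of the matched sub-words as a list. -/
structure RewRule (Λ : Type*) where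
  n : ℕ
  g : ℕ → Λ
  w : ℕ → List Λ
  w_ne : ∀ i < n, w i ≠ []
  f : ℕ → List Λ → List Λ
  h : ℕ → Λ → List Λ → Λ

/-- `interleave n u v = u 0 ++ v 0 ++ u 1 ++ v 1 ++ ⋯ ++ v (n-1) ++ u n`. -/
def interleave {Λ : Type*} (n : ℕ) (u v : ℕ → List Λ) : List Λ :=
  u 0 ++ ((List.range n).map fun i => v i ++ u (i + 1)).flatten

/-- Concatenation `v 0 ++ ⋯ ++ v (n-1)` of the matched sub-words. -/
def matchedVals {Λ : Type*} (n : ℕ) (v : ℕ → List Λ) : List Λ :=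
  ((List.range n).map v).flatten

/-- The output word `v₀' · u₀' · v₁' · u₁' ⋯ vₙ' · uₙ' · v_{n+1}'` of a rewriting
rule on the decomposition `u, v`, where `v_i' = f i (v 0 ⋯ v (n-1))` and `u_i'`
replaces each letter `a` of `u i` by `h i a (v 0 ⋯ v (n-1))`. -/
def rewOutput {Λ : Type*} (R : RewRule Λ) (u v : ℕ → List Λ) : List Λ :=
  R.f 0 (matchedVals R.n v) ++ (u 0).map (fun a => R.h 0 a (matchedVals R.n v)) ++
    ((List.range R.n).map fun i =>
      R.f (i + 1) (matchedVals R.n v) ++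
        (u (i + 1)).map fun a => R.h (i + 1) a (matchedVals R.n v)).flatten ++
    R.f (R.n + 1) (matchedVals R.n v)

/-- `x` rewrites to `y` under the rule `R`: `x` decomposes as
`u 0 · v 0 · u 1 ⋯ v (n-1) · u n` with every letter of `u i` below `g i` and
`v i ⊑ w i`, and `y` is the corresponding output word. -/
def Rewrites {Λ : Type*} [Lattice Λ] (R : RewRule Λ) (x y : List Λ) : Prop :=
  ∃ u v : ℕ → List Λ,
    x = interleave R.n u v ∧
    (∀ i ≤ R.n, ∀ a ∈ u i, a ≤ R.g i) ∧
    (∀ i < R.n, WordLE (v i) (R.w i)) ∧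
    y = rewOutput R u v

/-- `R(L)`: the set of words obtained by rewriting a word of `L` under `R`. -/
def RewRule.image {Λ : Type*} [Lattice Λ] (R : RewRule Λ) (L : Set (List Λ)) :
    Set (List Λ) :=
  {y | ∃ x ∈ L, Rewrites R x y}

/-- The rewriting functions of `R` are monotone and map tuples of atoms to
words of atoms (for the `f i`), respectively to atoms (for the `h i`). -/
def RuleOK {Λ : Type*} [Lattice Λ] [OrderBot Λ] (R : RewRule Λ) : Prop :=
  (∀ i ≤ R.n + 1, ∀ V V', WordLE V V' → WordLE (R.f i V) (R.f i V')) ∧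
  (∀ i ≤ R.n + 1, ∀ V, (∀ a ∈ V, IsAtom a) → ∀ a ∈ R.f i V, IsAtom a) ∧
  (∀ i ≤ R.n, ∀ x x' V V', x ≤ x' → WordLE V V' → R.h i x V ≤ R.h i x' V') ∧
  (∀ i ≤ R.n, ∀ x V, IsAtom x → (∀ a ∈ V, IsAtom a) → IsAtom (R.h i x V))

/-- The rewriting rule of a local instruction `(l, a, l')` over the powerset
lattice `𝒫(Σ)`, `Σ = Id × Loc × Env`: guard `⊤⋆ · ⟨_, l, _⟩ · ⊤⋆` (with
`n = 1`, `g 0 = g 1 = Σ` and middle word the one-letter word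
`[{(id, k, ρ) | k = l}]`) and rewriting functions `Id⋆ · f · Id⋆`, where the
star functions are the identity and
`f(X) = {(id, l', step ρ) | (id, l, ρ) ∈ X}`. -/
def localRule {Id Loc Env : Type*} (l l' : Loc) (step : Env → Env) :
    RewRule (Set (Id × Loc × Env)) where
  n := 1
  g := fun _ => Set.univ
  w := fun _ => [{s : Id × Loc × Env | s.2.1 = l}]
  w_ne := fun i _ => by simp
  f := fun i V =>
    if i = 1 then
      [{s : Id × Loc × Env | ∃ id ρ, (id, l, ρ) ∈ V.getD 0 ∅ ∧
        s = (id, l', step ρ)}]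
    else []
  h := fun _ a _ => a

lemma rewOutput_localRule {Id Loc Env : Type*} (l l' : Loc) (step : Env → Env)
    (u v : ℕ → List (Set (Id × Loc × Env))) (V : Set (Id × Loc × Env))
    (hveq : v 0 = [V]) :
    rewOutput (localRule l l' step) u v =
      u 0 ++ {s : Id × Loc × Env | ∃ id ρ, (id, l, ρ) ∈ V ∧
        s = (id, l', step ρ)} :: u 1 := by
  simp [rewOutput, localRule, matchedVals, List.range_succ, hveq]

/-- **The symbolic rewriting rule of a local instruction computes its
post-image**: identifying each word `σ₁⋯σ_m ∈ Σ*` with the word of singletons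
`{σ₁}⋯{σ_m}`, for every language `E ⊆ Σ*`,
`R(E) = {x·(id, l', step ρ)·y | x·(id, l, ρ)·y ∈ E}`. -/
theorem localRule_post {Id Loc Env : Type*} (l l' : Loc) (step : Env → Env)
    (E : Set (List (Id × Loc × Env))) :
    (localRule l l' step).image
        ((List.map fun σ => ({σ} : Set (Id × Loc × Env))) '' E) =
      (List.map fun σ => ({σ} : Set (Id × Loc × Env))) ''
        {w' | ∃ (x y : List (Id × Loc × Env)) (id : Id) (ρ : Env),
          x ++ (id, l, ρ) :: y ∈ E ∧ w' = x ++ (id, l', step ρ) :: y} := by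
  ext z
  constructor
  · rintro ⟨x, ⟨w, hw, rfl⟩, u, v, hx, -, hv, hz⟩
    have hv0 := hv 0 one_pos
    simp only [localRule, WordLE] at hv0
    obtain ⟨V, rest, hVle, hrest, hveq⟩ := List.forall₂_cons_right_iff.mp hv0
    have hrest' : rest = [] := List.forall₂_nil_right_iff.mp hrest
    subst hrest'
    simp only [interleave, localRule, List.range_succ, List.range_zero,
      List.map_cons, List.map_nil, List.nil_append, List.flatten, List.append_nil,
      hveq, List.singleton_append] at hx
    obtain ⟨a, bc, hab, ha, hbc⟩ := List.map_eq_append_iff.mp hx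
    obtain ⟨σ, c, hbc2, hσ, hc⟩ := List.map_eq_cons_iff.mp hbc
    obtain ⟨i0, l0, ρ0⟩ := σ
    have hmem : (i0, l0, ρ0) ∈ V := by rw [← hσ]; rfl
    have hσl : l0 = l := hVle hmem
    subst hσl
    refine ⟨a ++ (i0, l', step ρ0) :: c, ⟨a, c, i0, ρ0, ?_, rfl⟩, ?_⟩
    · rw [hab, hbc2] at hw; exact hw
    · have hfset : {s : Id × Loc × Env | ∃ id ρ, (id, l0, ρ) ∈ V ∧
          s = (id, l', step ρ)} = {(i0, l', step ρ0)} := by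
        ext s
        simp only [← hσ, Set.mem_setOf_eq, Set.mem_singleton_iff, Prod.mk.injEq]
        aesop
      rw [hz, rewOutput_localRule l0 l' step u v V hveq, hfset, ← ha,
        ← (by simpa using hc : List.map (fun σ => ({σ} : Set (Id × Loc × Env))) c = u 1)]
      simp
  · rintro ⟨w', ⟨x, y, id, ρ, hE, rfl⟩, rfl⟩
    refine ⟨(List.map fun σ => ({σ} : Set (Id × Loc × Env))) (x ++ (id, l, ρ) :: y),
      ⟨_, hE, rfl⟩, ?_⟩
    refine ⟨fun i => if i = 0 then List.map (fun σ => ({σ} : Set (Id × Loc × Env))) x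
        else List.map (fun σ => ({σ} : Set (Id × Loc × Env))) y,
      fun _ => [({(id, l, ρ)} : Set (Id × Loc × Env))], ?_, ?_, ?_, ?_⟩
    · simp [interleave, localRule, List.range_succ]
    · intro i hi a ha; simp [localRule]
    · intro i hi
      simp only [localRule, WordLE]
      refine List.Forall₂.cons ?_ List.Forall₂.nil
      intro s hs
      rw [Set.mem_singleton_iff] at hs
      subst hs; rfl
    · have hfset : {s : Id × Loc × Env | ∃ id' ρ', (id', l, ρ') ∈
          ({(id, l, ρ)} : Set (Id × Loc × Env)) ∧ s = (id', l', step ρ')} =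
          {(id, l', step ρ)} := by
        ext s
        simp only [Set.mem_setOf_eq, Set.mem_singleton_iff, Prod.mk.injEq]
        aesop
      rw [rewOutput_localRule l l' step _ _ _ rfl, hfset]
      simp
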